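/- Existence of the m-point Gauss quadrature formula: for every integer m ≥ 1 and all real numbers a < b, there exist m pairwise distinct nodes x₁, …, x_m in the open interval (a,b) and strictly positive weights w₁, …, w_m such that the quadrature rule (x_μ, w_μ)_{μ=1}^m on [a,b] is exact of degree 2m − 1, i.e., ∑_{μ=1}^m w_μ q(x_μ) = ∫_a^b q(t) dt for every real polynomial q of degree at most 2m − 1. -/

import Mathlib

open intervalIntegral Polynomial
open scoped Classical

noncomputable def polyInt (a b : ℝ) : Polynomial ℝ →ₗ[ℝ] ℝ where
  toFun p := ∫ t in a..b, p.eval t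
  map_add' p q := by
    simp only [eval_add]
    exact intervalIntegral.integral_add (p.continuous.intervalIntegrable a b)
      (q.continuous.intervalIntegrable a b)
  map_smul' c p := by
    simp only [eval_smul, smul_eq_mul, RingHom.id_apply]
    rw [intervalIntegral.integral_const_mul]

lemma exists_nonroot_Icc {a b : ℝ} (hab : a < b) {p : Polynomial ℝ} (hp : p ≠ 0) :
    ∃ c ∈ Set.Icc a b, p.eval c ≠ 0 := by
  by_contra h
  push_neg at h
  have hsub : Set.Icc a b ⊆ p.rootSet ℝ := by
    intro t ht
    rw [Polynomial.mem_rootSet]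
    exact ⟨hp, by simpa using h t ht⟩
  exact (Set.Icc_infinite hab).mono hsub (p.rootSet_finite ℝ)

lemma integral_sq_pos {a b : ℝ} (hab : a < b) {p : Polynomial ℝ} (hp : p ≠ 0) :
    0 < ∫ t in a..b, (p.eval t)^2 := by
  obtain ⟨c, hc, hc0⟩ := exists_nonroot_Icc hab hp
  refine intervalIntegral.integral_pos hab ?_ (fun x _ => sq_nonneg _) ⟨c, hc, by positivity⟩
  exact (p.continuous.pow 2).continuousOn

-- a polynomial with no real roots has constant sign
lemma same_sign_of_no_root {u : Polynomial ℝ} (hu : ∀ t : ℝ, u.eval t ≠ 0) :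
    ∀ s t : ℝ, 0 < u.eval s * u.eval t := by
  intro s t
  by_contra h
  push_neg at h
  have h0 : (0:ℝ) ∈ Set.uIcc (u.eval s) (u.eval t) := by
    rcases mul_nonpos_iff.1 h with ⟨h1, h2⟩ | ⟨h1, h2⟩
    · exact Set.mem_uIcc.2 (Or.inr ⟨h2, h1⟩)
    · exact Set.mem_uIcc.2 (Or.inl ⟨h1, h2⟩)
  obtain ⟨c, -, hc⟩ := intermediate_value_uIcc (u.continuous.continuousOn (s := Set.uIcc s t)) h0
  exact hu c hc

lemma exists_sign {a b : ℝ} (hab : a < b) (f : Polynomial ℝ) (hf : f ≠ 0)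
    (hev : ∀ r ∈ Set.Ioo a b, Even (f.roots.count r)) :
    ∃ ε : ℝ, (ε = 1 ∨ ε = -1) ∧ ∀ t ∈ Set.Ioo a b, 0 ≤ ε * f.eval t := by
  classical
  obtain ⟨u, hu⟩ := f.prod_multiset_X_sub_C_dvd
  have hprod0 : (f.roots.map fun r => X - C r).prod ≠ 0 := by
    apply Multiset.prod_ne_zero
    simp only [Multiset.mem_map]
    rintro ⟨r, -, hr⟩
    exact X_sub_C_ne_zero r hr
  have hu0 : u ≠ 0 := by
    rintro rfl
    rw [mul_zero] at hu
    exact hf hu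
  have huroots : u.roots = 0 := by
    have h1 : f.roots = f.roots + u.roots := by
      conv_lhs => rw [hu]
      rw [roots_mul (hu ▸ hf), roots_multiset_prod_X_sub_C]
    exact (left_eq_add.mp h1)
  have hune : ∀ t : ℝ, u.eval t ≠ 0 := by
    intro t ht
    have : t ∈ u.roots := by rw [mem_roots hu0]; exact ht
    rw [huroots] at this
    exact Multiset.notMem_zero t this
  set Rts := f.roots with hRdef
  set L := Rts.filter (fun r => r ≤ a) with hL
  set N := Rts.filter (fun r => ¬ r ≤ a) with hN
  set M := N.filter (fun r => r < b) with hM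
  set K := N.filter (fun r => ¬ r < b) with hK
  have hsplit : L + (M + K) = Rts := by
    rw [hM, hK, Multiset.filter_add_not, hL, hN, Multiset.filter_add_not]
  have hMcount : ∀ r ∈ M, 2 ∣ M.count r := by
    intro r hr
    have h1 : ¬ r ≤ a := (Multiset.mem_filter.1 (Multiset.mem_filter.1 hr).1).2
    have h2 : r < b := (Multiset.mem_filter.1 hr).2
    have : M.count r = Rts.count r := by
      rw [hM, Multiset.count_filter, if_pos h2, hN, Multiset.count_filter, if_pos h1]
    rw [this]
    exact (hev r ⟨not_le.1 h1, h2⟩).two_dvd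
  obtain ⟨T, hT⟩ := M.exists_smul_of_dvd_count hMcount
  set k := Multiset.card K with hk
  set σ : ℝ := if 0 < u.eval 0 then 1 else -1 with hσ
  refine ⟨σ * (-1)^k, ?_, ?_⟩
  · rcases Nat.even_or_odd k with he | ho
    · rw [he.neg_one_pow]
      by_cases h : 0 < u.eval 0 <;> simp [hσ, h]
    · rw [ho.neg_one_pow]
      by_cases h : 0 < u.eval 0 <;> simp [hσ, h]
  intro t ht
  have hft : f.eval t = (Rts.map fun r => t - r).prod * u.eval t := by
    rw [hu, eval_mul, eval_multiset_prod, Multiset.map_map]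
    congr 2
    ext r
    simp
  have hLp : 0 < (L.map fun r => t - r).prod := by
    apply Multiset.prod_pos
    intro x hx
    obtain ⟨r, hr, rfl⟩ := Multiset.mem_map.1 hx
    have : r ≤ a := (Multiset.mem_filter.1 hr).2
    linarith [ht.1]
  have hKp : 0 < (K.map fun r => r - t).prod := by
    apply Multiset.prod_pos
    intro x hx
    obtain ⟨r, hr, rfl⟩ := Multiset.mem_map.1 hx
    have : ¬ r < b := (Multiset.mem_filter.1 hr).2
    have := ht.2
    linarith [not_lt.1 ‹¬ r < b›]
  have hMp : (M.map fun r => t - r).prod = ((T.map fun r => t - r).prod)^2 := by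
    rw [hT, Multiset.map_nsmul, Multiset.prod_nsmul]
  have hKeq : (K.map fun r => t - r).prod = (-1)^k * (K.map fun r => r - t).prod := by
    have h1 : (K.map fun r => t - r) = K.map (fun r => (-1) * (r - t)) := by
      apply Multiset.map_congr rfl
      intro r _
      ring
    rw [h1, Multiset.prod_map_mul, Multiset.map_const', Multiset.prod_replicate]
  have hut : 0 < σ * u.eval t := by
    have := same_sign_of_no_root hune t 0
    by_cases h : 0 < u.eval 0
    · have : 0 < u.eval t := by nlinarith
      simp only [hσ, if_pos h]
      linarith
    · have h0 : u.eval 0 < 0 := lt_of_le_of_ne (not_lt.1 h) (hune 0)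
      have : u.eval t < 0 := by nlinarith
      simp only [hσ, if_neg h]
      linarith
  have hfin : σ * (-1)^k * f.eval t =
      (σ * u.eval t) * ((L.map fun r => t - r).prod * (K.map fun r => r - t).prod *
        (((T.map fun r => t - r).prod)^2 * (((-1:ℝ))^k)^2)) := by
    rw [hft, ← hsplit, Multiset.map_add, Multiset.map_add, Multiset.prod_add,
      Multiset.prod_add, hMp, hKeq]
    ring
  rw [hfin]
  positivity

lemma integral_ne_zero_of_even_counts {a b : ℝ} (hab : a < b) {f : Polynomial ℝ} (hf : f ≠ 0)
    (hev : ∀ r ∈ Set.Ioo a b, Even (f.roots.count r)) :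
    (∫ t in a..b, f.eval t) ≠ 0 := by
  obtain ⟨ε, hε, hsign⟩ := exists_sign hab f hf hev
  have hIcc : ∀ t ∈ Set.Icc a b, 0 ≤ ε * f.eval t := by
    have hclosed : IsClosed {t : ℝ | 0 ≤ ε * f.eval t} :=
      isClosed_le continuous_const (continuous_const.mul f.continuous)
    have hsub : Set.Icc a b ⊆ {t : ℝ | 0 ≤ ε * f.eval t} := by
      rw [← closure_Ioo hab.ne]
      exact hclosed.closure_subset_iff.mpr hsign
    exact fun t ht => hsub ht
  obtain ⟨c, hc, hc0⟩ := exists_nonroot_Icc hab hf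
  have hεne : ε ≠ 0 := by rcases hε with rfl | rfl <;> norm_num
  have hpos : 0 < ∫ t in a..b, ε * f.eval t := by
    refine intervalIntegral.integral_pos hab ((continuous_const.mul f.continuous).continuousOn)
      (fun x hx => hIcc x ⟨le_of_lt hx.1, hx.2⟩) ⟨c, hc, ?_⟩
    exact lt_of_le_of_ne (hIcc c hc) (fun h => (mul_ne_zero hεne hc0) h.symm)
  rw [intervalIntegral.integral_const_mul] at hpos
  intro h
  rw [h, mul_zero] at hpos
  exact lt_irrefl 0 hpos

lemma exists_orth (a b : ℝ) (m : ℕ) :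
    ∃ P : Polynomial ℝ, P ≠ 0 ∧ P.degree < ((m+1 : ℕ) : WithBot ℕ) ∧
      ∀ q : Polynomial ℝ, q.degree < (m : WithBot ℕ) → polyInt a b (q * P) = 0 := by
  classical
  set φ : (degreeLT ℝ (m+1)) →ₗ[ℝ] (Fin m → ℝ) :=
    LinearMap.pi (fun i => (polyInt a b).comp
      ((LinearMap.mulLeft ℝ ((X : Polynomial ℝ)^(i:ℕ))).comp (Submodule.subtype _))) with hφ
  have hnotinj : ¬ Function.Injective φ := by
    intro hinj
    have h1 := LinearMap.finrank_le_finrank_of_injective hinj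
    have h2 : Module.finrank ℝ (degreeLT ℝ (m+1)) = m + 1 :=
      (degreeLTEquiv ℝ (m+1)).finrank_eq.trans (by simp)
    simp only [h2, Module.finrank_pi, Fintype.card_fin] at h1
    omega
  rw [← LinearMap.ker_eq_bot] at hnotinj
  obtain ⟨P', hPmem, hPne⟩ := (Submodule.ne_bot_iff _).mp hnotinj
  refine ⟨(P' : Polynomial ℝ), by simpa using hPne, mem_degreeLT.1 P'.2, ?_⟩
  set ψ : Polynomial ℝ →ₗ[ℝ] ℝ := (polyInt a b).comp (LinearMap.mulRight ℝ (P' : Polynomial ℝ))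
    with hψ
  have hker : degreeLT ℝ m ≤ LinearMap.ker ψ := by
    rw [degreeLT_eq_span_X_pow, Submodule.span_le]
    intro q hq
    simp only [Finset.coe_image, Set.mem_image, Finset.mem_coe, Finset.mem_range] at hq
    obtain ⟨i, hi, rfl⟩ := hq
    have := congrFun (LinearMap.mem_ker.1 hPmem) ⟨i, hi⟩
    simp only [hφ, LinearMap.pi_apply, LinearMap.comp_apply, Submodule.subtype_apply,
      LinearMap.mulLeft_apply, Pi.zero_apply] at this
    simp only [SetLike.mem_coe, LinearMap.mem_ker, hψ, LinearMap.comp_apply,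
      LinearMap.mulRight_apply]
    simpa using this
  intro q hq
  exact LinearMap.mem_ker.1 (hker (mem_degreeLT.2 hq))

lemma polyInt_apply (a b : ℝ) (p : Polynomial ℝ) :
    polyInt a b p = ∫ t in a..b, p.eval t := rfl

/-- Existence of the m-point Gauss quadrature formula: for every `m ≥ 1` and
`a < b`, there are `m` pairwise distinct nodes in `(a,b)` and strictly
positive weights such that the quadrature rule is exact of degree `2m − 1`. -/
theorem exists_gauss_quadrature (m : ℕ) (hm : 1 ≤ m) (a b : ℝ) (hab : a < b) :
    ∃ (x : Fin m → ℝ) (w : Fin m → ℝ),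
      Function.Injective x ∧
      (∀ μ, x μ ∈ Set.Ioo a b) ∧
      (∀ μ, 0 < w μ) ∧
      (∀ q : Polynomial ℝ, q.natDegree ≤ 2 * m - 1 →
        ∑ μ, w μ * q.eval (x μ) = ∫ t in a..b, q.eval t) := by
  classical
  obtain ⟨P, hP0, hPdeg, horth⟩ := exists_orth a b m
  have hPnat : P.natDegree ≤ m := by
    have := (natDegree_lt_iff_degree_lt hP0).2 hPdeg
    omega
  set S : Finset ℝ := P.roots.toFinset.filter
    (fun r => r ∈ Set.Ioo a b ∧ ¬ Even (P.roots.count r)) with hS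
  have hSroot : ∀ r ∈ S, P.IsRoot r := fun r hr =>
    (mem_roots hP0).1 (Multiset.mem_toFinset.1 (Finset.mem_filter.1 hr).1)
  have hSIoo : ∀ r ∈ S, r ∈ Set.Ioo a b := fun r hr => (Finset.mem_filter.1 hr).2.1
  have hge : m ≤ S.card := by
    by_contra hlt
    push_neg at hlt
    set g : Polynomial ℝ := (S.val.map fun r => X - C r).prod with hg
    have hgmonic : g.Monic := monic_multiset_prod_of_monic _ _ (fun r _ => monic_X_sub_C r)
    have hg0 : g ≠ 0 := hgmonic.ne_zero
    have hgroots : g.roots = S.val := roots_multiset_prod_X_sub_C _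
    have hgdeg : g.natDegree = S.card := by
      rw [hg, natDegree_multiset_prod_of_monic _ (fun f hf => by
        obtain ⟨r, -, rfl⟩ := Multiset.mem_map.1 hf; exact monic_X_sub_C r)]
      simp [Multiset.map_map, Function.comp]
    have hgdegree : g.degree < (m : WithBot ℕ) := by
      rw [degree_eq_natDegree hg0, hgdeg]
      exact_mod_cast hlt
    have hzero := horth g hgdegree
    rw [polyInt_apply] at hzero
    have hgP0 : g * P ≠ 0 := mul_ne_zero hg0 hP0
    refine integral_ne_zero_of_even_counts hab hgP0 ?_ (by simpa using hzero)
    intro r hr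
    rw [roots_mul hgP0, Multiset.count_add, hgroots]
    by_cases hrS : r ∈ S
    · have hodd : ¬ Even (P.roots.count r) := (Finset.mem_filter.1 hrS).2.2
      have h1 : S.val.count r = 1 := Multiset.count_eq_one_of_mem S.nodup hrS
      rw [h1, add_comm]
      exact Nat.even_add_one.2 hodd
    · have h0 : S.val.count r = 0 := Multiset.count_eq_zero.2 hrS
      rw [h0, zero_add]
      by_contra hodd
      have hrroot : r ∈ P.roots := by
        rw [← Multiset.count_pos]
        rcases Nat.eq_zero_or_pos (P.roots.count r) with h | h
        · exact absurd (h ▸ Even.zero) hodd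
        · exact h
      exact hrS (Finset.mem_filter.2 ⟨Multiset.mem_toFinset.2 hrroot, hr, hodd⟩)
  have hle : S.card ≤ m :=
    le_trans (Finset.card_filter_le _ _)
      (le_trans (Multiset.toFinset_card_le _) (le_trans (card_roots' P) hPnat))
  have hcard : S.card = m := le_antisymm hle hge
  have hPm : P.natDegree = m := by
    refine le_antisymm hPnat ?_
    calc m = S.card := hcard.symm
      _ ≤ P.roots.toFinset.card := Finset.card_filter_le _ _
      _ ≤ Multiset.card P.roots := Multiset.toFinset_card_le _
      _ ≤ P.natDegree := card_roots' P
  have hcard' : Fintype.card ↥S = m := by rw [Fintype.card_coe, hcard]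
  set e : ↥S ≃ Fin m := Fintype.equivFinOfCardEq hcard' with he
  set x : Fin m → ℝ := fun μ => ((e.symm μ : ↥S) : ℝ) with hx
  have hxinj : Function.Injective x :=
    Subtype.coe_injective.comp e.symm.injective
  have hxIoo : ∀ μ, x μ ∈ Set.Ioo a b := fun μ => hSIoo _ (e.symm μ).2
  have hxroot : ∀ μ, P.eval (x μ) = 0 := fun μ => hSroot _ (e.symm μ).2
  have hinjOn : Set.InjOn x ↑(Finset.univ : Finset (Fin m)) := fun μ _ ν _ h => hxinj h
  set w : Fin m → ℝ := fun μ => polyInt a b (Lagrange.basis Finset.univ x μ) with hw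
  -- exactness for degree < m
  have hlow : ∀ r : Polynomial ℝ, r.degree < (m : WithBot ℕ) →
      polyInt a b r = ∑ μ, w μ * r.eval (x μ) := by
    intro r hr
    have hr' : r.degree < ((Finset.univ : Finset (Fin m)).card : WithBot ℕ) := by
      simpa using hr
    have heq := Lagrange.eq_interpolate hinjOn hr'
    conv_lhs => rw [heq]
    rw [Lagrange.interpolate_apply, map_sum]
    apply Finset.sum_congr rfl
    intro μ _
    rw [← smul_eq_C_mul, map_smul]
    simp only [hw, smul_eq_mul]
    ring
  set c : ℝ := P.leadingCoeff⁻¹ with hc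
  set Pm : Polynomial ℝ := P * C c with hPmdef
  have hmonic : Pm.Monic := monic_mul_leadingCoeff_inv hP0
  have hPmdeg : Pm.natDegree = m := by
    rw [hPmdef, natDegree_mul hP0 (fun hC => by
      simp only [C_eq_zero, hc, inv_eq_zero, leadingCoeff_eq_zero] at hC
      exact hP0 hC), natDegree_C, add_zero, hPm]
  have hPmroot : ∀ μ, Pm.eval (x μ) = 0 := by
    intro μ
    rw [hPmdef, eval_mul, hxroot, zero_mul]
  have hexact : ∀ q : Polynomial ℝ, q.natDegree ≤ 2 * m - 1 →
      ∑ μ, w μ * q.eval (x μ) = ∫ t in a..b, q.eval t := by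
    intro q hq
    set s : Polynomial ℝ := q /ₘ Pm with hsdef
    set r : Polynomial ℝ := q %ₘ Pm with hrdef
    have hdecomp : r + Pm * s = q := modByMonic_add_div q Pm
    have hrdeg : r.degree < (m : WithBot ℕ) := by
      have := degree_modByMonic_lt q hmonic
      rwa [degree_eq_natDegree hmonic.ne_zero, hPmdeg] at this
    have hsnat : s.natDegree < m := by
      rw [hsdef, natDegree_divByMonic q hmonic, hPmdeg]
      omega
    have hsdeg : (c • s).degree < (m : WithBot ℕ) :=
      lt_of_le_of_lt (degree_smul_le c s)
        (lt_of_le_of_lt degree_le_natDegree (by exact_mod_cast hsnat))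
    have h1 : polyInt a b q = polyInt a b r := by
      conv_lhs => rw [← hdecomp]
      rw [map_add, show Pm * s = (c • s) * P by
        rw [smul_eq_C_mul, hPmdef]; ring, horth _ hsdeg, add_zero]
    have h2 : ∀ μ, q.eval (x μ) = r.eval (x μ) := by
      intro μ
      conv_lhs => rw [← hdecomp]
      rw [eval_add, eval_mul, hPmroot, zero_mul, add_zero]
    calc ∑ μ, w μ * q.eval (x μ) = ∑ μ, w μ * r.eval (x μ) := by
          exact Finset.sum_congr rfl (fun μ _ => by rw [h2])
      _ = polyInt a b r := (hlow r hrdeg).symm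
      _ = polyInt a b q := h1.symm
      _ = ∫ t in a..b, q.eval t := polyInt_apply a b q
  have hwpos : ∀ μ, 0 < w μ := by
    intro μ
    set bμ : Polynomial ℝ := Lagrange.basis Finset.univ x μ with hb
    have hbne : bμ ≠ 0 := Lagrange.basis_ne_zero hinjOn (Finset.mem_univ μ)
    have hdeg : (bμ^2).natDegree ≤ 2 * m - 1 := by
      rw [natDegree_pow, Lagrange.natDegree_basis hinjOn (Finset.mem_univ μ)]
      simp only [Finset.card_univ, Fintype.card_fin]
      omega
    have hkey := hexact _ hdeg
    have hsum : ∑ ν, w ν * (bμ^2).eval (x ν) = w μ := by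
      rw [Finset.sum_eq_single μ]
      · rw [eval_pow, hb, Lagrange.eval_basis_self hinjOn (Finset.mem_univ μ)]; ring
      · intro ν _ hν
        rw [eval_pow, hb, Lagrange.eval_basis_of_ne (Ne.symm hν) (Finset.mem_univ ν)]
        ring
      · simp
    rw [hsum] at hkey
    rw [hkey]
    have hpos := integral_sq_pos hab hbne
    simpa [eval_pow] using hpos
  exact ⟨x, w, hxinj, hxIoo, hwpos, hexact⟩
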